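/- For the immersion ψ(x) = ((1 − √3 x)/2, (1 + √3 x)/2) of S² (unit imaginary quaternions) into S³×S³, the image tangent planes are J-invariant, and the metric induced from the nearly Kähler metric g equals 3/2 times the standard round metric on S². -/

import Mathlib

open Quaternion

noncomputable section

/-- The almost complex structure `J` at the point `(p, q)` of `S³ × S³`,
acting on `T_p S³ × T_q S³ ⊆ ℍ × ℍ`:
`J(U,V) = (1/√3)(2pq⁻¹V − U, −2qp⁻¹U + V)`. -/
def Jmap (p q : ℍ[ℝ]) (W : ℍ[ℝ] × ℍ[ℝ]) : ℍ[ℝ] × ℍ[ℝ] :=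
  (Real.sqrt 3)⁻¹ •
    ((2 : ℝ) • (p * q⁻¹ * W.2) - W.1, -((2 : ℝ) • (q * p⁻¹ * W.1)) + W.2)

/-- The almost product structure `P` at `(p, q)`: `P(U,V) = (pq⁻¹V, qp⁻¹U)`. -/
def Pmap (p q : ℍ[ℝ]) (W : ℍ[ℝ] × ℍ[ℝ]) : ℍ[ℝ] × ℍ[ℝ] :=
  (p * q⁻¹ * W.2, q * p⁻¹ * W.1)

/-- The product round metric on `S³ × S³` (on tangent pairs). -/
def prodInner (X Y : ℍ[ℝ] × ℍ[ℝ]) : ℝ :=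
  (inner ℝ X.1 Y.1 : ℝ) + (inner ℝ X.2 Y.2 : ℝ)

/-- The nearly Kähler metric `g(X,Y) = (1/2)(⟨X,Y⟩ + ⟨JX,JY⟩)` at `(p,q)`. -/
def gmet (p q : ℍ[ℝ]) (X Y : ℍ[ℝ] × ℍ[ℝ]) : ℝ :=
  (1 / 2) * (prodInner X Y + prodInner (Jmap p q X) (Jmap p q Y))

/-- The differential of `ψ(x) = ((1 − √3 x)/2, (1 + √3 x)/2)` applied to a
tangent vector `v` of `S²` at `x`. -/
def dpsi (v : ℍ[ℝ]) : ℍ[ℝ] × ℍ[ℝ] :=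
  ((-(Real.sqrt 3 / 2)) • v, (Real.sqrt 3 / 2) • v)

/-! ### Auxiliary lemmas -/

lemma aux_re_comm (a b : ℍ[ℝ]) : (a * b).re = (b * a).re := by
  rw [Quaternion.re_mul, Quaternion.re_mul]; ring

lemma aux_normSq_one (x : ℍ[ℝ]) (hx1 : ‖x‖ = 1) : ((normSq x : ℝ) : ℍ[ℝ]) = 1 := by
  rw [Quaternion.normSq_eq_norm_mul_self, hx1]; norm_num

lemma aux_inner_mul_left (x v w : ℍ[ℝ]) (hx1 : ‖x‖ = 1) :
    (inner ℝ (x * v) (x * w) : ℝ) = (inner ℝ v w : ℝ) := by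
  rw [Quaternion.inner_def, Quaternion.inner_def, StarMul.star_mul,
    show x * v * (star w * star x) = (x * v * star w) * star x by simp only [mul_assoc],
    aux_re_comm, ← mul_assoc, ← mul_assoc, Quaternion.star_mul_self,
    aux_normSq_one x hx1, one_mul]

lemma aux_xx (x : ℍ[ℝ]) (hx : x.re = 0) (hx1 : ‖x‖ = 1) : x * x = -1 := by
  have hst : star x = -x := Quaternion.star_eq_neg.2 hx
  have h := Quaternion.star_mul_self x
  rw [hst, neg_mul, aux_normSq_one x hx1] at h
  rw [← neg_neg (x * x), h]

/-- The key `J`-invariance computation, with an abstract scalar `s` in place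
of `√3`. -/
lemma aux_J (s : ℝ) (hs0 : s ≠ 0) (x u p q : ℍ[ℝ])
    (hpp : p * q⁻¹ = -q) (hqq : q * p⁻¹ = -p)
    (hqu : q * u = (1/2 : ℝ) • u + (s/2 : ℝ) • (x * u))
    (hpu : p * u = (1/2 : ℝ) • u - (s/2 : ℝ) • (x * u)) :
    (s⁻¹ • ((2 : ℝ) • (p * q⁻¹ * ((s / 2) • u)) - (-(s / 2)) • u,
        -((2 : ℝ) • (q * p⁻¹ * ((-(s / 2)) • u))) + (s / 2) • u) : ℍ[ℝ] × ℍ[ℝ])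
      = ((-(s / 2)) • (x * u), (s / 2) • (x * u)) := by
  rw [hpp, hqq, Prod.smul_mk, Prod.mk.injEq]
  rw [neg_mul, neg_mul, mul_smul_comm, mul_smul_comm, hqu, hpu]
  constructor <;> (match_scalars <;> field_simp <;> ring)

lemma aux_prod (a b : ℍ[ℝ]) : prodInner (dpsi a) (dpsi b) = (3/2) * (inner ℝ a b : ℝ) := by
  have h3 : Real.sqrt 3 * Real.sqrt 3 = 3 := Real.mul_self_sqrt (by norm_num)
  rw [prodInner, dpsi, dpsi]
  simp only [real_inner_smul_left, real_inner_smul_right]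
  linear_combination ((inner ℝ a b : ℝ) / 2) * h3

/-- for `ψ(x) = ((1 − √3 x)/2, (1 + √3 x)/2)` on the sphere
`S²` of unit imaginary quaternions, the image tangent planes are
`J`-invariant, and the induced metric is `3/2` times the round metric:
`g(dψ(v), dψ(w)) = (3/2)⟨v,w⟩`. -/
theorem stmt_14 (x v w : ℍ[ℝ]) (hx : x.re = 0) (hx1 : ‖x‖ = 1)
    (hv : v.re = 0) (hvx : (inner ℝ v x : ℝ) = 0)
    (hw : w.re = 0) (hwx : (inner ℝ w x : ℝ) = 0) :
    (∃ v' : ℍ[ℝ], v'.re = 0 ∧ (inner ℝ v' x : ℝ) = 0 ∧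
        Jmap ((1 / 2 : ℝ) • (1 - Real.sqrt 3 • x)) ((1 / 2 : ℝ) • (1 + Real.sqrt 3 • x))
          (dpsi v) = dpsi v') ∧
    gmet ((1 / 2 : ℝ) • (1 - Real.sqrt 3 • x)) ((1 / 2 : ℝ) • (1 + Real.sqrt 3 • x))
        (dpsi v) (dpsi w) = (3 / 2) * (inner ℝ v w : ℝ) := by
  have hs : Real.sqrt 3 * Real.sqrt 3 = 3 := Real.mul_self_sqrt (by norm_num)
  have hs0 : Real.sqrt 3 ≠ 0 := by positivity
  have hxx := aux_xx x hx hx1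
  set s : ℝ := Real.sqrt 3 with hsdef
  set p : ℍ[ℝ] := (1 / 2 : ℝ) • (1 - s • x) with hpdef
  set q : ℍ[ℝ] := (1 / 2 : ℝ) • (1 + s • x) with hqdef
  have hqp : q * p = 1 := by
    have h : (1 + s • x) * (1 - s • x) = 1 - (s * s) • (x * x) := by
      simp only [mul_sub, add_mul, one_mul, mul_one, smul_mul_smul_comm]; module
    rw [hpdef, hqdef, smul_mul_smul_comm, h, hxx, hs]; module
  have hpq : p * q = 1 := by
    have h : (1 - s • x) * (1 + s • x) = 1 - (s * s) • (x * x) := by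
      simp only [mul_sub, sub_mul, mul_add, add_mul, one_mul, mul_one, smul_mul_smul_comm]
      module
    rw [hpdef, hqdef, smul_mul_smul_comm, h, hxx, hs]; module
  have hqinv : q⁻¹ = p := inv_eq_of_mul_eq_one_right hqp
  have hpinv : p⁻¹ = q := inv_eq_of_mul_eq_one_right hpq
  have hpp : p * q⁻¹ = -q := by
    rw [hqinv]
    have h : (1 - s • x) * (1 - s • x) = 1 - (2*s) • x + (s * s) • (x * x) := by
      simp only [mul_sub, sub_mul, one_mul, mul_one, smul_mul_smul_comm]; module
    rw [hpdef, hqdef, smul_mul_smul_comm, h, hxx, hs]; module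
  have hqq : q * p⁻¹ = -p := by
    rw [hpinv]
    have h : (1 + s • x) * (1 + s • x) = 1 + (2*s) • x + (s * s) • (x * x) := by
      simp only [mul_add, add_mul, one_mul, mul_one, smul_mul_smul_comm]; module
    rw [hpdef, hqdef, smul_mul_smul_comm, h, hxx, hs]; module
  have hqu : ∀ u : ℍ[ℝ], q * u = (1/2 : ℝ) • u + (s/2 : ℝ) • (x * u) := by
    intro u
    rw [hqdef, smul_mul_assoc, add_mul, one_mul, smul_mul_assoc]; module
  have hpu : ∀ u : ℍ[ℝ], p * u = (1/2 : ℝ) • u - (s/2 : ℝ) • (x * u) := by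
    intro u
    rw [hpdef, smul_mul_assoc, sub_mul, one_mul, smul_mul_assoc]; module
  have hJ : ∀ u : ℍ[ℝ], Jmap p q (dpsi u) = dpsi (x * u) := fun u =>
    aux_J s hs0 x u p q hpp hqq (hqu u) (hpu u)
  refine ⟨⟨x * v, ?_, ?_, hJ v⟩, ?_⟩
  · rw [Quaternion.re_mul]
    rw [Quaternion.inner_def, Quaternion.re_mul] at hvx
    simp only [Quaternion.re_star, Quaternion.imI_star, Quaternion.imJ_star,
      Quaternion.imK_star] at hvx
    rw [hx, hv] at *
    nlinarith [hvx]
  · rw [Quaternion.inner_def, aux_re_comm, ← mul_assoc, Quaternion.star_mul_self,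
      aux_normSq_one x hx1, one_mul, hv]
  · rw [gmet, hJ v, hJ w, aux_prod, aux_prod, aux_inner_mul_left x v w hx1]
    ring
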